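/- In the algebra of labeled ordered rooted trees, for F, E₁,…,Eₙ ∈ 𝔇 one has u(F; v(E₁),…,v(Eₙ)) = v(E₁)·u(F; v(E₂),…,v(Eₙ)) − Σ_{i=2}^{n} u(F; v(E₂),…,u(E_i; v(E₁)),…,v(Eₙ)) − t(v(E₁), u(F; v(E₂),…,v(Eₙ))). -/

import Mathlib

/-- An ordered labeled subtree: a node with a label and an ordered list of children. -/
inductive LSub (D : Type) : Type
  | mk : D → List (LSub D) → LSub D

/-- An ordered rooted tree with unlabeled root and non-root nodes labeled in `D`,
represented by the list of subtrees attached to the root. -/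
abbrev LTree (D : Type) := List (LSub D)

mutual
  /-- Number of nodes of a labeled subtree. -/
  def sizeS {D : Type} : LSub D → Nat
    | .mk _ ts => 1 + sizeL ts
  /-- Total number of (labeled) nodes of a forest. -/
  def sizeL {D : Type} : List (LSub D) → Nat
    | [] => 0
    | t :: ts => sizeS t + sizeL ts
end

mutual
  /-- Graft pending subtrees (given by `f`, indexed by the preorder index of nodes)
  onto a subtree whose own preorder index is `i`; attached subtrees are prepended. -/
  def graftS {D : Type} (f : Nat → List (LSub D)) (i : Nat) : LSub D → LSub D
    | .mk d ts => .mk d (f i ++ graftL f (i + 1) ts)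
  def graftL {D : Type} (f : Nat → List (LSub D)) (i : Nat) : List (LSub D) → List (LSub D)
    | [] => []
    | t :: ts => graftS f i t :: graftL f (i + sizeS t) ts
end

/-- Graft pending subtrees onto a tree; the root has preorder index `0`. -/
def graft {D : Type} (f : Nat → List (LSub D)) (t : LTree D) : LTree D :=
  f 0 ++ graftL f 1 t

/-- All lists of length `m` with entries `< n` (choices of attachment nodes). -/
def choices : Nat → Nat → List (List Nat)
  | 0, _ => [[]]
  | m + 1, n => (List.range n).flatMap fun c => (choices m n).map (c :: ·)

/-- The Grossman–Larson product of two basis trees, as an element of the free module: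
the sum over all ways of attaching the root-subtrees of `T1` to nodes of `T2`. -/
noncomputable def mulT (k : Type) [Semiring k] {D : Type} (T1 T2 : LTree D) :
    LTree D →₀ k :=
  ((choices T1.length (1 + sizeL T2)).map fun c =>
    Finsupp.single
      (graft (fun i => (T1.zip c).filterMap fun p => if p.2 = i then some p.1 else none) T2)
      (1 : k)).sum

/-- `v E`: the two-node tree whose single non-root node is labeled `E`. -/
def vT {D : Type} (E : D) : LTree D := [.mk E []]

/-- `u(E; T₁,…,T_k)`: root has one child labeled `E`, with which the roots of the `Tᵢ`
are identified. -/
def uT {D : Type} (E : D) (Ts : List (LTree D)) : LTree D := [.mk E Ts.flatten]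

/-- `t(T₁,…,T_k)`: identify the roots of the `Tᵢ`. -/
def tT {D : Type} (Ts : List (LTree D)) : LTree D := Ts.flatten

/-- All decompositions of an ordered multiset into a sub-multiset and its complement
(used for the coproduct). -/
def splits {α : Type} : List α → List (List α × List α)
  | [] => [([], [])]
  | a :: l => ((splits l).map fun p => (a :: p.1, p.2)) ++ ((splits l).map fun p => (p.1, a :: p.2))

/-- The labeled node of `T` at position `(i, p)`: the `i`-th root-subtree, then follow
the path `p` of child indices. -/
def subAtL {D : Type} : List (LSub D) → Nat → List Nat → Option (LSub D)
  | [], _, _ => none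
  | t :: _, 0, [] => some t
  | .mk _ cs :: _, 0, j :: p => subAtL cs j p
  | _ :: ts, i + 1, p => subAtL ts i p

/-- Replace the node of `T` at position `(i, p)`: relabel it with `G` and replace the
subtree rooted there (its list of children) by `T'`. -/
def replaceAtL {D : Type} (G : D) (T' : List (LSub D)) :
    List (LSub D) → Nat → List Nat → List (LSub D)
  | [], _, _ => []
  | _ :: ts, 0, [] => .mk G T' :: ts
  | .mk d cs :: ts, 0, j :: p => .mk d (replaceAtL G T' cs j p) :: ts
  | t :: ts, i + 1, p => t :: replaceAtL G T' ts i p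

section Aux
variable {D : Type}

def leaf (E : D) : LSub D := LSub.mk E []

theorem flatten_map_vT (Es : List D) : (Es.map vT).flatten = Es.map leaf := by
  induction Es with
  | nil => rfl
  | cons E Es ih => simp [vT, leaf, ih]

theorem sizeL_map_leaf (Es : List D) : sizeL (Es.map leaf) = Es.length := by
  induction Es with
  | nil => rfl
  | cons E Es ih => simp [leaf, sizeL, sizeS, ih]; omega

theorem graftL_leaf_nil (f : Nat → List (LSub D)) (Es : List D) :
    ∀ i, (∀ j, i ≤ j → f j = []) → graftL f i (Es.map leaf) = Es.map leaf := by
  induction Es with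
  | nil => intro i h; rfl
  | cons E Es ih =>
    intro i h
    simp only [List.map_cons, graftL, graftS, leaf, h i le_rfl, graftL,
      List.nil_append, sizeS, sizeL]
    rw [ih]
    intro j hj; exact h j (by omega)

theorem graftL_leaf_set (A : LSub D) (Es : List D) :
    ∀ i j c (hj : j < Es.length), c = i + j →
      graftL (fun m => if c = m then [A] else []) i (Es.map leaf) =
        (Es.map leaf).set j (LSub.mk (Es[j]'hj) [A]) := by
  induction Es with
  | nil => intro i j c h; simp at h
  | cons E Es ih =>
    intro i j c hj hc
    cases j with
    | zero =>
      simp only [List.map_cons, graftL, graftS, leaf, List.set]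
      rw [if_pos (by omega)]
      simp only [sizeS, sizeL, List.append_nil, List.nil_append, graftL]
      rw [graftL_leaf_nil]
      · simp
      · intro j hjj; rw [if_neg (by omega)]
    | succ j' =>
      simp only [List.map_cons, graftL, graftS, leaf, List.set]
      rw [if_neg (by omega)]
      simp only [sizeS, sizeL, List.append_nil, List.nil_append, graftL]
      rw [ih (i + (1 + 0)) j' c (by simpa using hj) (by omega)]
      simp

theorem flatten_set_vT (Es : List D) :
    ∀ j (x : LSub D), j < Es.length →
      ((Es.map vT).set j [x]).flatten = (Es.map leaf).set j x := by
  induction Es with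
  | nil => intro j x h; simp at h
  | cons E Es ih =>
    intro j x hj
    cases j with
    | zero => simp [vT, leaf, flatten_map_vT]
    | succ j' => simp [vT, leaf, ih j' x (by simpa using hj), flatten_map_vT]

theorem fc_eq (E₁ : D) (c : Nat) :
    (fun i => ((vT E₁).zip [c]).filterMap fun p => if p.2 = i then some p.1 else none) =
      (fun i => if c = i then [leaf E₁] else []) := by
  funext i
  simp only [vT, leaf, List.zip, List.zipWith, List.filterMap]
  by_cases h : c = i
  · subst h; simp
  · rw [if_neg h]; simp [h]

end Aux

theorem flatMap_single {α β : Type*} (g : α → β) (l : List α) :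
    (l.flatMap fun c => [g c]) = l.map g := by
  induction l with
  | nil => rfl
  | cons a l ih => simp [ih]

theorem mulT_key (k D : Type) [Field k] (F E₁ : D) (Es : List D) :
    mulT k (vT E₁) (uT F (Es.map vT)) =
      Finsupp.single (tT [vT E₁, uT F (Es.map vT)]) (1 : k)
      + Finsupp.single (uT F (vT E₁ :: Es.map vT)) (1 : k)
      + ((List.finRange Es.length).map fun (i : Fin Es.length) =>
          Finsupp.single (uT F ((Es.map vT).set i.1 (uT (Es.get i) [vT E₁]))) (1 : k)).sum := by
  have hsz : 1 + sizeL (uT F (Es.map vT)) = 2 + Es.length := by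
    simp [uT, sizeL, sizeS, flatten_map_vT, sizeL_map_leaf]; omega
  rw [mulT, hsz]
  have hlen : (vT E₁).length = 1 := rfl
  rw [hlen]
  have hch : choices 1 (2 + Es.length) = (List.range (2 + Es.length)).map ([·]) := by
    simp [choices, flatMap_single]
  rw [hch, List.map_map]
  simp only [Function.comp_def]
  simp only [fc_eq]
  rw [List.range_add, List.map_append, List.sum_append]
  have hr2 : List.range 2 = [0, 1] := rfl
  rw [hr2]
  have hT2 : uT F (Es.map vT) = [LSub.mk F (Es.map leaf)] := by
    simp [uT, flatten_map_vT]
  have hG : ∀ c : Nat, graft (fun m => if c = m then [leaf E₁] else []) (uT F (Es.map vT)) =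
      (if c = 0 then [leaf E₁] else []) ++
        [LSub.mk F ((if c = 1 then [leaf E₁] else []) ++
          graftL (fun m => if c = m then [leaf E₁] else []) 2 (Es.map leaf))] := by
    intro c
    rw [hT2, graft]
    simp [graftL, graftS]
  -- term c = 0
  have h0 : graft (fun m => if 0 = m then [leaf E₁] else []) (uT F (Es.map vT)) =
      tT [vT E₁, uT F (Es.map vT)] := by
    rw [hG]
    rw [graftL_leaf_nil _ Es 2 (by intro j hj; rw [if_neg (by omega)])]
    simp [tT, vT, leaf, uT, flatten_map_vT]
  -- term c = 1
  have h1 : graft (fun m => if 1 = m then [leaf E₁] else []) (uT F (Es.map vT)) =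
      uT F (vT E₁ :: Es.map vT) := by
    rw [hG]
    rw [graftL_leaf_nil _ Es 2 (by intro j hj; rw [if_neg (by omega)])]
    simp [uT, vT, leaf, flatten_map_vT]
  -- terms c = 2 + j
  have h2 : ((List.range Es.length).map fun j =>
        Finsupp.single (graft (fun m => if 2 + j = m then [leaf E₁] else [])
          (uT F (Es.map vT))) (1 : k)) =
      ((List.finRange Es.length).map fun (i : Fin Es.length) =>
        Finsupp.single (uT F ((Es.map vT).set i.1 (uT (Es.get i) [vT E₁]))) (1 : k)) := by
    rw [← List.map_coe_finRange_eq_range, List.map_map]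
    apply List.map_congr_left
    intro i _
    simp only [Function.comp_def]
    rw [hG]
    rw [if_neg (by omega), if_neg (by omega)]
    rw [graftL_leaf_set (leaf E₁) Es 2 i.1 (2 + i.1) i.2 rfl]
    have : uT (Es.get i) [vT E₁] = [LSub.mk (Es[i.1]'i.2) [leaf E₁]] := by
      simp [uT, vT, leaf]
    rw [this]
    simp only [uT, flatten_set_vT Es i.1 _ i.2]
    simp
  simp only [List.map_cons, List.map_nil, List.sum_cons, List.sum_nil, h0, h1]
  rw [show ((List.range Es.length).map fun c => (2 + c)).map
      (fun c => Finsupp.single (graft (fun i => if c = i then [leaf E₁] else [])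
        (uT F (Es.map vT))) (1 : k)) =
      (List.range Es.length).map (fun j =>
        Finsupp.single (graft (fun m => if 2 + j = m then [leaf E₁] else [])
          (uT F (Es.map vT))) (1 : k)) from by rw [List.map_map]; rfl]
  rw [h2]
  abel

/-- **Lemma (BrushEquation).** In the algebra of labeled ordered rooted trees, for
`F, E₁, …, Eₙ ∈ 𝔇` (here `E₁` and the list `Es = [E₂, …, Eₙ]`):
`u(F; v(E₁),…,v(Eₙ)) = v(E₁)·u(F; v(E₂),…,v(Eₙ))
  − Σ_{i=2}^{n} u(F; v(E₂),…,u(E_i; v(E₁)),…,v(Eₙ)) − t(v(E₁), u(F; v(E₂),…,v(Eₙ)))`. -/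
theorem brushEquation (k D : Type) [Field k] (F E₁ : D) (Es : List D) :
    (Finsupp.single (uT F (vT E₁ :: Es.map vT)) (1 : k)) =
      mulT k (vT E₁) (uT F (Es.map vT))
        - ((List.finRange Es.length).map fun (i : Fin Es.length) =>
            Finsupp.single (uT F ((Es.map vT).set i.1 (uT (Es.get i) [vT E₁]))) (1 : k)).sum
        - Finsupp.single (tT [vT E₁, uT F (Es.map vT)]) (1 : k) := by
  rw [mulT_key]
  abel
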